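/- For all real numbers a and b, kl(p_a‖p_b) + kl(p_b‖p_a) ≤ (a−b)², where p_a = 1/(1+e^a) and p_b = 1/(1+e^b). -/

import Mathlib

noncomputable def klBer (p q : ℝ) : ℝ :=
  p * Real.log (p / q) + (1 - p) * Real.log ((1 - p) / (1 - q))

lemma sig_sub_le (x y : ℝ) (h : x ≤ y) :
    1/(1+Real.exp x) - 1/(1+Real.exp y) ≤ y - x := by
  have hx : (0:ℝ) < 1 + Real.exp x := by positivity
  have hy : (0:ℝ) < 1 + Real.exp y := by positivity
  have h1 : 1/(1+Real.exp x) - 1/(1+Real.exp y)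
      = (Real.exp y - Real.exp x) / ((1+Real.exp x)*(1+Real.exp y)) := by
    field_simp; ring
  rw [h1]
  have h2 : (Real.exp y - Real.exp x) / ((1+Real.exp x)*(1+Real.exp y))
      ≤ (Real.exp y - Real.exp x) / Real.exp y := by
    apply div_le_div_of_nonneg_left (by simp [Real.exp_le_exp, h]) (Real.exp_pos y)
    nlinarith [Real.exp_pos x, Real.exp_pos y]
  refine h2.trans ?_
  have h3 : (Real.exp y - Real.exp x) / Real.exp y = 1 - Real.exp (x - y) := by
    rw [Real.exp_sub]; field_simp
  rw [h3]
  nlinarith [Real.add_one_le_exp (x - y)]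

lemma sig_nonneg_sub (x y : ℝ) (h : x ≤ y) :
    0 ≤ 1/(1+Real.exp x) - 1/(1+Real.exp y) := by
  have hx : (0:ℝ) < 1 + Real.exp x := by positivity
  have hy : (0:ℝ) < 1 + Real.exp y := by positivity
  have := Real.exp_le_exp.mpr h
  have : 1/(1+Real.exp y) ≤ 1/(1+Real.exp x) := by
    apply one_div_le_one_div_of_le hx; linarith
  linarith

lemma key (a b : ℝ) :
    klBer (1/(1+Real.exp a)) (1/(1+Real.exp b))
      + klBer (1/(1+Real.exp b)) (1/(1+Real.exp a))
    = (1/(1+Real.exp b) - 1/(1+Real.exp a)) * (a - b) := by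
  have ha : (0:ℝ) < 1 + Real.exp a := by positivity
  have hb : (0:ℝ) < 1 + Real.exp b := by positivity
  have h1a : 1 - 1/(1+Real.exp a) = Real.exp a/(1+Real.exp a) := by field_simp; ring
  have h1b : 1 - 1/(1+Real.exp b) = Real.exp b/(1+Real.exp b) := by field_simp; ring
  have e1 : Real.log ((1/(1+Real.exp a)) / (1/(1+Real.exp b)))
      = Real.log (1+Real.exp b) - Real.log (1+Real.exp a) := by
    rw [Real.log_div (by positivity) (by positivity), Real.log_div one_ne_zero ha.ne',
        Real.log_div one_ne_zero hb.ne', Real.log_one]; ring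
  have e2 : Real.log ((1/(1+Real.exp b)) / (1/(1+Real.exp a)))
      = Real.log (1+Real.exp a) - Real.log (1+Real.exp b) := by
    rw [Real.log_div (by positivity) (by positivity), Real.log_div one_ne_zero hb.ne',
        Real.log_div one_ne_zero ha.ne', Real.log_one]; ring
  have e3 : Real.log ((Real.exp a/(1+Real.exp a)) / (Real.exp b/(1+Real.exp b)))
      = (a - Real.log (1+Real.exp a)) - (b - Real.log (1+Real.exp b)) := by
    rw [Real.log_div (by positivity) (by positivity),
        Real.log_div (Real.exp_ne_zero a) ha.ne',
        Real.log_div (Real.exp_ne_zero b) hb.ne', Real.log_exp, Real.log_exp]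
  have e4 : Real.log ((Real.exp b/(1+Real.exp b)) / (Real.exp a/(1+Real.exp a)))
      = (b - Real.log (1+Real.exp b)) - (a - Real.log (1+Real.exp a)) := by
    rw [Real.log_div (by positivity) (by positivity),
        Real.log_div (Real.exp_ne_zero b) hb.ne',
        Real.log_div (Real.exp_ne_zero a) ha.ne', Real.log_exp, Real.log_exp]
  unfold klBer
  rw [h1a, h1b, e1, e2, e3, e4]
  field_simp
  ring

theorem klBer_add_klBer_le_sq (a b : ℝ) :
    klBer (1 / (1 + Real.exp a)) (1 / (1 + Real.exp b))
      + klBer (1 / (1 + Real.exp b)) (1 / (1 + Real.exp a)) ≤ (a - b)^2 := by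
  rw [key a b]
  rcases le_total a b with h | h
  · have h1 := sig_sub_le a b h
    have h2 := sig_nonneg_sub a b h
    nlinarith
  · have h1 := sig_sub_le b a h
    have h2 := sig_nonneg_sub b a h
    nlinarith
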